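/- A preference profile P on candidate set C with |C| ≥ 3 is single-peaked on a star (a tree with exactly one internal vertex) if and only if there exists a candidate c ∈ C such that every voter ranks c in first or second position. -/

import Mathlib

open SimpleGraph

section Star

variable {C : Type*} {S : SimpleGraph C} {c : C}

/-- In a star with center `c`, every path starting at `c` to `v ≠ c` is a single edge. -/
lemma star_path_from_center (hS : ∀ x y, S.Adj x y → x = c ∨ y = c)
    {v : C} (p : S.Walk c v) (hp : p.IsPath) (hv : v ≠ c) :
    ∃ h : S.Adj c v, p = SimpleGraph.Walk.cons h SimpleGraph.Walk.nil := by
  cases p with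
  | nil => exact absurd rfl hv
  | @cons _ w _ h q =>
    rw [SimpleGraph.Walk.cons_isPath_iff] at hp
    cases q with
    | nil => exact ⟨h, rfl⟩
    | @cons _ x _ h' r =>
      exfalso
      have hx : x = c := by
        rcases hS _ _ h' with hwc | hxc
        · exact absurd hwc h.ne'
        · exact hxc
      apply hp.2
      rw [SimpleGraph.Walk.support_cons]
      exact List.mem_cons_of_mem _ (hx ▸ r.start_mem_support)

/-- In a star with center `c`, every path ending at `c` from `u ≠ c` is a single edge. -/
lemma star_path_to_center (hS : ∀ x y, S.Adj x y → x = c ∨ y = c)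
    {u : C} (p : S.Walk u c) (hp : p.IsPath) (hu : u ≠ c) :
    ∃ h : S.Adj u c, p = SimpleGraph.Walk.cons h SimpleGraph.Walk.nil := by
  cases p with
  | nil => exact absurd rfl hu
  | @cons _ w _ h q =>
    rw [SimpleGraph.Walk.cons_isPath_iff] at hp
    have hw : w = c := by
      rcases hS _ _ h with huc | hwc
      · exact absurd huc hu
      · exact hwc
    subst hw
    have hq : q = SimpleGraph.Walk.nil := (SimpleGraph.Walk.isPath_iff_eq_nil (p := q)).mp hp.1
    subst hq
    exact ⟨h, rfl⟩

lemma star_path_classify (hS : ∀ x y, S.Adj x y → x = c ∨ y = c)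
    {u v : C} (p : S.Walk u v) (hp : p.IsPath) (hu : u ≠ c) (hv : v ≠ c) (huv : u ≠ v) :
    ∃ (h1 : S.Adj u c) (h2 : S.Adj c v),
      p = SimpleGraph.Walk.cons h1 (SimpleGraph.Walk.cons h2 SimpleGraph.Walk.nil) := by
  cases p with
  | nil => exact absurd rfl huv
  | @cons _ w _ h q =>
    rw [SimpleGraph.Walk.cons_isPath_iff] at hp
    have hw : w = c := by
      rcases hS _ _ h with huc | hwc
      · exact absurd huc hu
      · exact hwc
    subst hw
    obtain ⟨h2, rfl⟩ := star_path_from_center hS q hp.1 hv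
    exact ⟨h, h2, rfl⟩

/-- Support of a path in a star is contained in `{u, v, c}`. -/
lemma star_path_support (hS : ∀ x y, S.Adj x y → x = c ∨ y = c)
    {u v : C} (p : S.Walk u v) (hp : p.IsPath) {b : C} (hb : b ∈ p.support) :
    b = u ∨ b = v ∨ b = c := by
  by_cases hu : u = c
  · subst hu
    by_cases hv : v = u
    · subst hv
      rw [(SimpleGraph.Walk.isPath_iff_eq_nil (p := p)).mp hp] at hb
      simp only [SimpleGraph.Walk.support_nil, List.mem_singleton] at hb
      exact Or.inl hb
    · obtain ⟨h, rfl⟩ := star_path_from_center hS p hp (fun h => hv h)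
      simp only [SimpleGraph.Walk.support_cons, SimpleGraph.Walk.support_nil] at hb
      rw [List.mem_cons, List.mem_singleton] at hb
      rcases hb with hb | hb
      · exact Or.inl hb
      · exact Or.inr (Or.inl hb)
  · by_cases huv : u = v
    · subst huv
      rw [(SimpleGraph.Walk.isPath_iff_eq_nil (p := p)).mp hp] at hb
      simp only [SimpleGraph.Walk.support_nil, List.mem_singleton] at hb
      exact Or.inl hb
    · by_cases hv : v = c
      · subst hv
        obtain ⟨h, rfl⟩ := star_path_to_center hS p hp hu
        simp only [SimpleGraph.Walk.support_cons, SimpleGraph.Walk.support_nil] at hb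
        rw [List.mem_cons, List.mem_singleton] at hb
        rcases hb with hb | hb
        · exact Or.inl hb
        · exact Or.inr (Or.inl hb)
      · obtain ⟨h1, h2, rfl⟩ := star_path_classify hS p hp hu hv huv
        simp only [SimpleGraph.Walk.support_cons, SimpleGraph.Walk.support_nil,
          List.mem_cons, List.mem_singleton] at hb
        rcases hb with hb | hb | hb
        · exact Or.inl hb
        · exact Or.inr (Or.inr hb)
        · rcases hb with hb | hb
          · exact Or.inr (Or.inl hb)
          · simp at hb

lemma star_acyclic (hS : ∀ x y, S.Adj x y → x = c ∨ y = c) : S.IsAcyclic := by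
  rw [SimpleGraph.isAcyclic_iff_path_unique]
  intro u v p q
  apply Subtype.ext
  by_cases huv : u = v
  · subst huv
    rw [(SimpleGraph.Walk.isPath_iff_eq_nil).mp p.2,
      (SimpleGraph.Walk.isPath_iff_eq_nil).mp q.2]
  · by_cases hu : u = c
    · subst hu
      obtain ⟨h1, hp⟩ := star_path_from_center hS p.1 p.2 (fun h => huv h.symm)
      obtain ⟨h2, hq⟩ := star_path_from_center hS q.1 q.2 (fun h => huv h.symm)
      rw [hp, hq]
    · by_cases hv : v = c
      · subst hv
        obtain ⟨h1, hp⟩ := star_path_to_center hS p.1 p.2 hu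
        obtain ⟨h2, hq⟩ := star_path_to_center hS q.1 q.2 hu
        rw [hp, hq]
      · obtain ⟨h1, h2, hp⟩ := star_path_classify hS p.1 p.2 hu hv huv
        obtain ⟨h1', h2', hq⟩ := star_path_classify hS q.1 q.2 hu hv huv
        rw [hp, hq]

end Star

def SinglePeakedOn {V C : Type*} (pref : V → C → C → Prop) (top : V → C)
    (T : SimpleGraph C) : Prop :=
  ∀ (i : V) (a b : C), a ≠ b → b ≠ top i →
    (∃ p : T.Walk (top i) a, p.IsPath ∧ b ∈ p.support) →
    pref i (top i) b ∧ pref i b a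

/-- A profile on at least 3 candidates is single-peaked on a star if and only if
there is a candidate `c` that every voter ranks in first or second position. -/
theorem stmt5 {V C : Type*} [Fintype C] (hC : 3 ≤ Fintype.card C)
    (pref : V → C → C → Prop) (hlin : ∀ i, IsStrictTotalOrder C (pref i))
    (top : V → C) (htop : ∀ i b, b ≠ top i → pref i (top i) b) :
    (∃ (T : SimpleGraph C) (z : C), T.IsTree ∧
        (∀ x, x ≠ z → T.Adj z x) ∧ (∀ x y, T.Adj x y → x = z ∨ y = z) ∧
        SinglePeakedOn pref top T)
      ↔ ∃ c : C, ∀ i, top i = c ∨ ∀ b, b ≠ top i → b ≠ c → pref i c b := by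
  constructor
  · rintro ⟨T, z, htree, hadj, hstar, hsp⟩
    refine ⟨z, fun i => ?_⟩
    by_cases hiz : top i = z
    · exact Or.inl hiz
    · refine Or.inr fun b hb hbz => ?_
      have h1 : T.Adj z (top i) := hadj _ hiz
      have h2 : T.Adj z b := hadj _ hbz
      have hwalk : ∃ p : T.Walk (top i) b, p.IsPath ∧ z ∈ p.support := by
        refine ⟨SimpleGraph.Walk.cons h1.symm (SimpleGraph.Walk.cons h2 SimpleGraph.Walk.nil),
          ?_, ?_⟩
        · rw [SimpleGraph.Walk.cons_isPath_iff, SimpleGraph.Walk.cons_isPath_iff]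
          refine ⟨⟨SimpleGraph.Walk.IsPath.nil, ?_⟩, ?_⟩
          · simp [h2.ne]
          · simp only [SimpleGraph.Walk.support_cons, SimpleGraph.Walk.support_nil,
              List.mem_cons, List.mem_singleton]
            push_neg
            exact ⟨fun h => hiz h, fun h => hb (h.symm), by simp⟩
        · simp
      exact (hsp i b z hbz (fun h => hiz h.symm) hwalk).2
  · rintro ⟨c, hc⟩
    set S : SimpleGraph C := {
      Adj := fun x y => x ≠ y ∧ (x = c ∨ y = c)
      symm := by
        constructor
        rintro x y ⟨hxy, h⟩
        exact ⟨hxy.symm, h.symm⟩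
      loopless := by constructor; rintro x ⟨hx, _⟩; exact hx rfl } with hSdef
    have hS : ∀ x y, S.Adj x y → x = c ∨ y = c := fun x y h => h.2
    have hadj : ∀ x, x ≠ c → S.Adj c x := fun x hx => ⟨fun h => hx h.symm, Or.inl rfl⟩
    refine ⟨S, c, ⟨?_, star_acyclic hS⟩, hadj, fun x y h => by
      rcases hS x y h with h' | h' <;> [exact Or.inl h'; exact Or.inr h'], ?_⟩
    · -- connected
      have : Nonempty C := by
        have : 0 < Fintype.card C := by omega
        exact Fintype.card_pos_iff.mp this
      refine ⟨fun x y => ?_⟩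
      have hx : S.Reachable x c := by
        by_cases h : x = c
        · exact h ▸ SimpleGraph.Reachable.refl x
        · exact SimpleGraph.Adj.reachable ⟨h, Or.inr rfl⟩
      have hy : S.Reachable y c := by
        by_cases h : y = c
        · exact h ▸ SimpleGraph.Reachable.refl y
        · exact SimpleGraph.Adj.reachable ⟨h, Or.inr rfl⟩
      exact hx.trans hy.symm
    · -- single-peaked
      intro i a b hab hbtop ⟨p, hp, hb⟩
      refine ⟨htop i b hbtop, ?_⟩
      rcases star_path_support hS p hp hb with h | h | h
      · exact absurd h hbtop
      · exact absurd h.symm hab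
      · subst h
        rcases hc i with h | h
        · exact absurd h.symm hbtop
        · have hatop : a ≠ top i := by
            rintro rfl
            rw [(SimpleGraph.Walk.isPath_iff_eq_nil (p := p)).mp hp] at hb
            simp only [SimpleGraph.Walk.support_nil, List.mem_singleton] at hb
            exact hbtop hb
          exact h a hatop hab
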